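/- For every positive integer n, (1 + 2π√3/√n)^n · e^{−2π√3·√n} < 1/3. Equivalently, with α := √3/(2π) + 3/√n, one has (2πα/√3)^n · e^{−(2πα/√3 − 1)n} < 1/3. -/

import Mathlib

open Real

set_option maxHeartbeats 1000000 in
lemma stmt_18_aux (n : ℕ) (hn : 0 < n) :
    (1 + 2 * π * Real.sqrt 3 / Real.sqrt n) ^ (n : ℕ) *
        Real.exp (-(2 * π * Real.sqrt 3) * Real.sqrt n) < 1 / 3 := by
  have hπ : 0 < π := Real.pi_pos
  have h3 : (0:ℝ) < Real.sqrt 3 := Real.sqrt_pos.2 (by norm_num)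
  have hn1 : (1:ℝ) ≤ n := by exact_mod_cast hn
  have hsn : (0:ℝ) < Real.sqrt n := Real.sqrt_pos.2 (by linarith)
  have hsn1 : (1:ℝ) ≤ Real.sqrt n := by
    have := Real.sqrt_le_sqrt hn1
    simpa using this
  set c : ℝ := 2 * π * Real.sqrt 3 / Real.sqrt n with hc
  have hcpos : 0 < c := by rw [hc]; positivity
  clear_value c
  have hsq : Real.sqrt n * Real.sqrt n = n := Real.mul_self_sqrt (by positivity)
  have h3sq : Real.sqrt 3 * Real.sqrt 3 = 3 := Real.mul_self_sqrt (by norm_num)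
  have hcn : c * n = 2 * π * Real.sqrt 3 * Real.sqrt n := by
    rw [hc]
    field_simp
    linear_combination -hsq
  have h1c : (0:ℝ) < 1 + c := by linarith
  have hpow : (1 + c) ^ n = Real.exp (n * Real.log (1 + c)) := by
    rw [Real.exp_nat_mul, Real.exp_log h1c]
  have hπ315 : π < 3.15 := by
    have := Real.pi_lt_d2
    linarith
  have hπ3 : 3 < π := Real.pi_gt_three
  have hs3 : Real.sqrt 3 < 1.74 := by
    rw [show (1.74:ℝ) = Real.sqrt (1.74^2) from (Real.sqrt_sq (by norm_num)).symm]
    exact Real.sqrt_lt_sqrt (by norm_num) (by norm_num)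
  have hc11 : c ≤ 11 := by
    rw [hc, div_le_iff₀ hsn]
    have h1 : π * Real.sqrt 3 < 3.15 * 1.74 :=
      mul_lt_mul'' hπ315 hs3 (le_of_lt hπ) (le_of_lt h3)
    have h2 : (11:ℝ) * 1 ≤ 11 * Real.sqrt n :=
      mul_le_mul_of_nonneg_left hsn1 (by norm_num)
    nlinarith [h1, h2]
  set s : ℝ := Real.sqrt (1 + c) with hsdef
  have hs : s * s = 1 + c := Real.mul_self_sqrt (by linarith)
  have hs0 : 0 < s := Real.sqrt_pos.2 h1c
  clear_value s
  have hs1 : 1 < s := by nlinarith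
  have hsub : s ≤ 3.47 := by
    rw [hsdef, show (3.47:ℝ) = Real.sqrt (3.47^2) from (Real.sqrt_sq (by norm_num)).symm]
    exact Real.sqrt_le_sqrt (by norm_num; linarith)
  have hlog : Real.log (1 + c) = 2 * Real.log s := by
    rw [← hs, Real.log_mul (by linarith) (by linarith)]; ring
  have hls : Real.log s ≤ s - 1 := Real.log_le_sub_one_of_pos hs0
  have hkey : (s - 1) ^ 2 ≤ c - Real.log (1 + c) := by
    rw [hlog]; nlinarith
  have hnc2 : (n : ℝ) * c ^ 2 = 12 * π ^ 2 := by
    have h : (n : ℝ) * c ^ 2 = c * (c * n) := by ring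
    rw [h, hcn, hc]
    field_simp
    linear_combination 4 * h3sq
  have hfact : (n : ℝ) * (s - 1) ^ 2 * (s + 1) ^ 2 = 12 * π ^ 2 := by
    have h1 : (s - 1) * (s + 1) = c := by linear_combination hs
    have h2 : (n : ℝ) * (s - 1) ^ 2 * (s + 1) ^ 2 = (n : ℝ) * ((s - 1) * (s + 1)) ^ 2 := by ring
    rw [h2, h1]; exact hnc2
  have hsp : (s + 1) ^ 2 ≤ 20 := by nlinarith
  have hA : (0:ℝ) ≤ (n : ℝ) * (s - 1) ^ 2 := by positivity
  have h108 : (108:ℝ) < 12 * π ^ 2 := by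
    have h := mul_lt_mul'' hπ3 hπ3 (by norm_num) (by norm_num)
    rw [sq]; linarith
  have h20 : (n : ℝ) * (s - 1) ^ 2 * (s + 1) ^ 2 ≤ (n : ℝ) * (s - 1) ^ 2 * 20 :=
    mul_le_mul_of_nonneg_left hsp hA
  have hbig : 2 < (n : ℝ) * (s - 1) ^ 2 := by
    rw [hfact] at h20
    linarith
  have hlog3 : Real.log 3 ≤ 2 := by
    have := Real.log_le_sub_one_of_pos (by norm_num : (0:ℝ) < 3)
    linarith
  have hmain : Real.log 3 < (n : ℝ) * (c - Real.log (1 + c)) := by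
    have h := mul_le_mul_of_nonneg_left hkey (by linarith : (0:ℝ) ≤ (n:ℝ))
    exact lt_of_lt_of_le (lt_of_le_of_lt hlog3 hbig) h
  have hexp : -(2 * π * Real.sqrt 3) * Real.sqrt n = -(c * n) := by
    rw [hcn]; ring
  rw [hexp, hpow, ← Real.exp_add]
  have h13 : (1:ℝ)/3 = Real.exp (-Real.log 3) := by
    rw [Real.exp_neg, Real.exp_log (by norm_num : (0:ℝ) < 3)]
    norm_num
  rw [h13, Real.exp_lt_exp]
  nlinarith [hmain]

/-- The numerical estimate in Theorem 4: for every positive integer `n`,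
`(1 + 2π√3/√n)ⁿ · e^{−2π√3·√n} < 1/3`; equivalently, with `α := √3/(2π) + 3/√n`,
`(2πα/√3)ⁿ · e^{−(2πα/√3 − 1)n} < 1/3`. -/
theorem stmt_18 :
    ∀ n : ℕ, 0 < n →
      (1 + 2 * π * Real.sqrt 3 / Real.sqrt n) ^ (n : ℕ) *
          Real.exp (-(2 * π * Real.sqrt 3) * Real.sqrt n) < 1 / 3 ∧
      (∀ α : ℝ, α = Real.sqrt 3 / (2 * π) + 3 / Real.sqrt n →
        (2 * π * α / Real.sqrt 3) ^ (n : ℕ) *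
            Real.exp (-(2 * π * α / Real.sqrt 3 - 1) * n) < 1 / 3) := by
  intro n hn
  have hπ : 0 < π := Real.pi_pos
  have h3 : (0:ℝ) < Real.sqrt 3 := Real.sqrt_pos.2 (by norm_num)
  have hn1 : (1:ℝ) ≤ n := by exact_mod_cast hn
  have hsn : (0:ℝ) < Real.sqrt n := Real.sqrt_pos.2 (by linarith)
  have hsq : Real.sqrt n * Real.sqrt n = n := Real.mul_self_sqrt (by positivity)
  have h3sq : Real.sqrt 3 * Real.sqrt 3 = 3 := Real.mul_self_sqrt (by norm_num)
  refine ⟨stmt_18_aux n hn, ?_⟩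
  intro α hα
  have heq : 2 * π * α / Real.sqrt 3 = 1 + 2 * π * Real.sqrt 3 / Real.sqrt n := by
    rw [hα]
    field_simp
    linear_combination (-2 * π) * h3sq
  have heq2 : -(2 * π * α / Real.sqrt 3 - 1) * n = -(2 * π * Real.sqrt 3) * Real.sqrt n := by
    rw [heq]
    field_simp
    linear_combination (2 * π * Real.sqrt 3) * hsq
  rw [heq2, heq]
  exact stmt_18_aux n hn
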